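/- With Z_h(E) = |Z_h(E)|e^{iθ_h(E)} as above and G L²-normalized, one has dE = h|Z_h(E)|² dθ_h, i.e. θ̇_h(E) = 1/(h|Z_h(E)|²). Consequently, if |Z_h(E)| ≥ c > 0 on an interval containing two consecutive Dirichlet (or Neumann) eigenvalues E < Ẽ, then since ∫_E^{Ẽ} θ̇_h = π, the spacing satisfies Ẽ - E ≥ π c² h. -/

import Mathlib

open Set

theorem stmt7 (h c E Et : ℝ) (hh : 0 < h) (hc : 0 < c) (hEE : E < Et)
    (Z : ℝ → ℂ) (hZc : Continuous Z) (θ : ℝ → ℝ)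
    (hθ : ∀ t ∈ Icc E Et, HasDerivAt θ (1 / (h * ‖Z t‖ ^ 2)) t)
    (hlb : ∀ t ∈ Icc E Et, c ≤ ‖Z t‖)
    (hwind : θ Et - θ E = Real.pi) :
    Real.pi * c ^ 2 * h ≤ Et - E := by
  have hC : ∀ t ∈ Icc E Et, ‖(1 / (h * ‖Z t‖ ^ 2) : ℝ)‖ ≤ 1 / (h * c ^ 2) := by
    intro t ht
    have h1 : c ≤ ‖Z t‖ := hlb t ht
    have h2 : c ^ 2 ≤ ‖Z t‖ ^ 2 := by
      apply pow_le_pow_left₀ hc.le h1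
    have hpos : 0 < h * c ^ 2 := by positivity
    have hpos2 : 0 < h * ‖Z t‖ ^ 2 := by
      have : (0:ℝ) < ‖Z t‖ ^ 2 := lt_of_lt_of_le (by positivity) h2
      positivity
    rw [Real.norm_eq_abs, abs_of_pos (by positivity)]
    apply one_div_le_one_div_of_le hpos
    exact mul_le_mul_of_nonneg_left h2 hh.le
  have key := Convex.norm_image_sub_le_of_norm_hasDerivWithin_le
    (f := θ) (f' := fun t => 1 / (h * ‖Z t‖ ^ 2))
    (fun t ht => (hθ t ht).hasDerivWithinAt) hC (convex_Icc E Et)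
    ⟨le_refl E, hEE.le⟩ ⟨hEE.le, le_refl Et⟩
  rw [Real.norm_eq_abs, Real.norm_eq_abs, hwind] at key
  have hπ : |Real.pi| = Real.pi := abs_of_pos Real.pi_pos
  rw [hπ, abs_of_pos (by linarith)] at key
  have hpos : 0 < h * c ^ 2 := by positivity
  rw [div_mul_eq_mul_div, le_div_iff₀ hpos] at key
  nlinarith [key]
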